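/- (Jackson q-beta integral) For 0 < q < 1 and Re b > 0, Re(c-b) > 0: ∫_0^1 t^{b-1} (tq;q)_∞/(tq^{c-b};q)_∞ d_q t = Γ_q(b)Γ_q(c-b)/Γ_q(c). -/

import Mathlib

/-- The infinite q-Pochhammer symbol `(a;q)_∞ = ∏_{k≥0} (1 - a q^k)`. -/
noncomputable def qPochInf (q a : ℂ) : ℂ := ∏' k : ℕ, (1 - a * q ^ k)

/-- The q-gamma function `Γ_q(z) = ((q;q)_∞ / (q^z;q)_∞) (1-q)^{1-z}`. -/
noncomputable def qGamma (q : ℝ) (z : ℂ) : ℂ :=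
  qPochInf q (q : ℂ) / qPochInf q (Complex.exp (z * Real.log q)) *
    ((1 - q : ℂ)) ^ ((1 : ℂ) - z)

open Finset Filter Topology

namespace JQB

variable {q : ℝ} {a z : ℂ}

/-- finite q-Pochhammer -/
noncomputable def P (q : ℝ) (a : ℂ) (n : ℕ) : ℂ := ∏ k ∈ Finset.range n, (1 - a * (q:ℂ)^k)

noncomputable def D (q : ℝ) : ℝ := Real.exp ((1-q)⁻¹ + q * (1-q)⁻¹ * (1-q)⁻¹)

lemma factor_ne_zero (hq0 : 0 < q) (hq1 : q < 1) (ha : ‖a‖ < 1) (k : ℕ) :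
    (1 : ℂ) - a * (q:ℂ)^k ≠ 0 := by
  intro h
  have h1 : a * (q:ℂ)^k = 1 := by linear_combination -h
  have : ‖a * (q:ℂ)^k‖ < 1 := by
    rw [norm_mul, norm_pow, Complex.norm_real, Real.norm_of_nonneg hq0.le]
    calc ‖a‖ * q ^ k ≤ ‖a‖ * 1 := by
          exact mul_le_mul_of_nonneg_left (pow_le_one₀ hq0.le hq1.le) (norm_nonneg a)
      _ < 1 := by simpa using ha
  rw [h1] at this; simp at this

lemma P_ne_zero (hq0 : 0 < q) (hq1 : q < 1) (ha : ‖a‖ < 1) (n : ℕ) : P q a n ≠ 0 :=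
  Finset.prod_ne_zero_iff.mpr fun k _ => factor_ne_zero hq0 hq1 ha k

lemma summable_log (hq0 : 0 < q) (hq1 : q < 1) (ha : ‖a‖ < 1) :
    Summable fun k : ℕ => Complex.log (1 - a * (q:ℂ)^k) := by
  obtain ⟨N, hN⟩ : ∃ N : ℕ, ‖a‖ * q ^ N ≤ 1/2 := by
    have h := tendsto_pow_atTop_nhds_zero_of_lt_one hq0.le hq1
    have h2 := (h.const_mul ‖a‖)
    rw [mul_zero] at h2
    have := (h2.eventually_le_const (by norm_num : (0:ℝ) < 1/2)).exists
    simpa using this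
  rw [← summable_nat_add_iff N]
  apply Summable.of_norm_bounded (g := fun k => (3/2 * (‖a‖ * q ^ N)) * q ^ k)
    (((summable_geometric_of_lt_one hq0.le hq1).mul_left _))
  intro k
  have hnorm : ‖-(a * (q:ℂ)^(k+N))‖ = ‖a‖ * (q ^ N * q ^ k) := by
    rw [norm_neg, norm_mul, norm_pow, Complex.norm_real, Real.norm_of_nonneg hq0.le,
      pow_add, mul_comm (q ^ k)]
  have hle : ‖-(a * (q:ℂ)^(k+N))‖ ≤ 1/2 := by
    rw [hnorm, ← mul_assoc]
    calc ‖a‖ * q ^ N * q ^ k ≤ 1/2 * 1 := by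
          apply mul_le_mul hN (pow_le_one₀ hq0.le hq1.le) (by positivity) (by norm_num)
      _ = 1/2 := by norm_num
  have := Complex.norm_log_one_add_half_le_self hle
  have heq : (1 : ℂ) + -(a * (q:ℂ)^(k+N)) = 1 - a * (q:ℂ)^(k+N) := by ring
  rw [heq] at this
  refine this.trans ?_
  rw [hnorm]
  exact le_of_eq (by ring)

lemma multipliable (hq0 : 0 < q) (hq1 : q < 1) (ha : ‖a‖ < 1) :
    Multipliable fun k : ℕ => 1 - a * (q:ℂ)^k :=
  Complex.multipliable_of_summable_log (summable_log hq0 hq1 ha)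

lemma qPochInf_ne_zero (hq0 : 0 < q) (hq1 : q < 1) (ha : ‖a‖ < 1) :
    qPochInf q a ≠ 0 := by
  have h := Complex.cexp_tsum_eq_tprod (f := fun k => 1 - a * (q:ℂ)^k)
    (fun k => factor_ne_zero hq0 hq1 ha k) (summable_log hq0 hq1 ha)
  rw [qPochInf, ← h]
  exact Complex.exp_ne_zero _

lemma norm_pow_mul_lt (hq0 : 0 < q) (hq1 : q < 1) (ha : ‖a‖ < 1) (n : ℕ) :
    ‖(q:ℂ)^n * a‖ < 1 := by
  rw [norm_mul, norm_pow, Complex.norm_real, Real.norm_of_nonneg hq0.le]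
  calc q ^ n * ‖a‖ ≤ 1 * ‖a‖ :=
        mul_le_mul_of_nonneg_right (pow_le_one₀ hq0.le hq1.le) (norm_nonneg a)
    _ < 1 := by simpa using ha

lemma shift (hq0 : 0 < q) (hq1 : q < 1) (ha : ‖a‖ < 1) (n : ℕ) :
    P q a n * qPochInf q ((q:ℂ)^n * a) = qPochInf q a := by
  have hmt : Multipliable (fun i : ℕ => (fun k : ℕ => 1 - a * (q:ℂ)^k) (i + n)) := by
    apply (multipliable (a := (q:ℂ)^n * a) hq0 hq1 (norm_pow_mul_lt hq0 hq1 ha n)).congr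
    intro i
    simp only [pow_add]
    ring
  have h := Multipliable.prod_mul_tprod_nat_mul' (f := fun k : ℕ => 1 - a * (q:ℂ)^k) (k := n) hmt
  calc P q a n * qPochInf q ((q:ℂ)^n * a)
      = (∏ i ∈ Finset.range n, (1 - a * (q:ℂ)^i)) * ∏' i : ℕ, (1 - a * (q:ℂ)^(i+n)) := by
        rw [P]
        congr 1
        rw [qPochInf]
        exact tprod_congr fun k => by simp only [pow_add]; ring
    _ = qPochInf q a := by rw [qPochInf]; simpa using h


lemma norm_P_le (hq0 : 0 < q) (hq1 : q < 1) (ha : ‖a‖ < 1) (n : ℕ) :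
    ‖P q a n‖ ≤ Real.exp ((1-q)⁻¹) := by
  rw [P, norm_prod]
  calc ∏ k ∈ Finset.range n, ‖1 - a * (q:ℂ)^k‖
      ≤ ∏ k ∈ Finset.range n, Real.exp (q^k) := by
        apply Finset.prod_le_prod (fun k _ => norm_nonneg _)
        intro k _
        calc ‖1 - a * (q:ℂ)^k‖ ≤ ‖(1:ℂ)‖ + ‖a * (q:ℂ)^k‖ := norm_sub_le _ _
          _ = 1 + ‖a‖ * q^k := by
              rw [norm_one, norm_mul, norm_pow, Complex.norm_real,
                Real.norm_of_nonneg hq0.le]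
          _ ≤ 1 + q^k := by
              have : ‖a‖ * q^k ≤ 1 * q^k :=
                mul_le_mul_of_nonneg_right ha.le (by positivity)
              linarith
          _ = q^k + 1 := by ring
          _ ≤ Real.exp (q^k) := Real.add_one_le_exp _
    _ = Real.exp (∑ k ∈ Finset.range n, q^k) := by rw [Real.exp_sum]
    _ ≤ Real.exp ((1-q)⁻¹) := by
        apply Real.exp_le_exp.mpr
        calc ∑ k ∈ Finset.range n, q^k ≤ ∑' k : ℕ, q^k :=
              Summable.sum_le_tsum _ (fun k _ => by positivity)
                (summable_geometric_of_lt_one hq0.le hq1)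
          _ = (1-q)⁻¹ := tsum_geometric_of_lt_one hq0.le hq1

lemma exp_neg_le_one_sub (hq0 : 0 < q) (hq1 : q < 1) {x : ℝ} (hx0 : 0 < x) (hxq : x ≤ q) :
    Real.exp (-(x * (1-q)⁻¹)) ≤ 1 - x := by
  have h1q : (0:ℝ) < 1 - q := by linarith
  have h1x : (0:ℝ) < 1 - x := by linarith
  have key : (1-x)⁻¹ ≤ Real.exp (x * (1-q)⁻¹) := by
    have e1 : (1-x)⁻¹ = 1 + x * (1-x)⁻¹ := by field_simp; ring
    have e2 : (1-x)⁻¹ ≤ (1-q)⁻¹ := by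
      apply inv_anti₀ h1q; linarith
    calc (1-x)⁻¹ = 1 + x * (1-x)⁻¹ := e1
      _ ≤ 1 + x * (1-q)⁻¹ := by
          have := mul_le_mul_of_nonneg_left e2 hx0.le; linarith
      _ ≤ Real.exp (x * (1-q)⁻¹) := by
          have := Real.add_one_le_exp (x * (1-q)⁻¹); linarith
  rw [Real.exp_neg]
  rw [inv_le_comm₀ (Real.exp_pos _) h1x] at *
  exact key

lemma norm_Pq_ge (hq0 : 0 < q) (hq1 : q < 1) (n : ℕ) :
    Real.exp (-(q * (1-q)⁻¹ * (1-q)⁻¹)) ≤ ‖P q (q:ℂ) n‖ := by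
  have hreal : P q (q:ℂ) n = ((∏ k ∈ Finset.range n, (1 - q^(k+1)) : ℝ) : ℂ) := by
    rw [P]
    push_cast
    apply Finset.prod_congr rfl
    intro k _
    rw [pow_succ']
  have hpos : ∀ k ∈ Finset.range n, (0:ℝ) < 1 - q^(k+1) := by
    intro k _
    have : q^(k+1) < 1 := pow_lt_one₀ hq0.le hq1 (Nat.succ_ne_zero k)
    linarith
  have hprodpos : (0:ℝ) < ∏ k ∈ Finset.range n, (1 - q^(k+1)) :=
    Finset.prod_pos hpos
  rw [hreal, Complex.norm_real, Real.norm_of_nonneg hprodpos.le]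
  calc Real.exp (-(q * (1-q)⁻¹ * (1-q)⁻¹))
      ≤ Real.exp (-(∑ k ∈ Finset.range n, q^(k+1)) * (1-q)⁻¹) := by
        apply Real.exp_le_exp.mpr
        have h1q : (0:ℝ) < 1 - q := by linarith
        have hsum : ∑ k ∈ Finset.range n, q^(k+1) ≤ q * (1-q)⁻¹ := by
          have : ∑ k ∈ Finset.range n, q^(k+1) = q * ∑ k ∈ Finset.range n, q^k := by
            rw [Finset.mul_sum]
            exact Finset.sum_congr rfl fun k _ => by rw [pow_succ']
          rw [this]
          apply mul_le_mul_of_nonneg_left _ hq0.le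
          calc ∑ k ∈ Finset.range n, q^k ≤ ∑' k : ℕ, q^k :=
                Summable.sum_le_tsum _ (fun k _ => by positivity)
                  (summable_geometric_of_lt_one hq0.le hq1)
            _ = (1-q)⁻¹ := tsum_geometric_of_lt_one hq0.le hq1
        have hinv : (0:ℝ) ≤ (1-q)⁻¹ := by positivity
        nlinarith [mul_le_mul_of_nonneg_right hsum hinv]
    _ = ∏ k ∈ Finset.range n, Real.exp (-(q^(k+1) * (1-q)⁻¹)) := by
        rw [← Real.exp_sum]
        congr 1
        rw [neg_mul, Finset.sum_mul, ← Finset.sum_neg_distrib]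
    _ ≤ ∏ k ∈ Finset.range n, (1 - q^(k+1)) := by
        apply Finset.prod_le_prod (fun k _ => (Real.exp_pos _).le)
        intro k _
        exact exp_neg_le_one_sub hq0 hq1 (by positivity)
          (pow_le_of_le_one hq0.le hq1.le (Nat.succ_ne_zero k))

noncomputable def cf (q : ℝ) (a : ℂ) (n : ℕ) : ℂ := P q a n / P q (q:ℂ) n

lemma norm_c_le (hq0 : 0 < q) (hq1 : q < 1) (ha : ‖a‖ < 1) (n : ℕ) :
    ‖cf q a n‖ ≤ D q := by
  rw [cf, norm_div, D, Real.exp_add]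
  calc ‖P q a n‖ / ‖P q (q:ℂ) n‖
      ≤ Real.exp ((1-q)⁻¹) / Real.exp (-(q * (1-q)⁻¹ * (1-q)⁻¹)) := by
        apply div_le_div₀ (Real.exp_pos _).le (norm_P_le hq0 hq1 ha n)
          (Real.exp_pos _) (norm_Pq_ge hq0 hq1 n)
    _ = Real.exp ((1-q)⁻¹) * Real.exp (q * (1-q)⁻¹ * (1-q)⁻¹) := by
        rw [Real.exp_neg]
        field_simp


lemma summable_bound {u : ℕ → ℂ} {C : ℝ} (hu : ∀ n, ‖u n‖ ≤ C) (hz : ‖z‖ < 1) :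
    Summable fun n => u n * z^n := by
  apply Summable.of_norm_bounded (g := fun n => C * ‖z‖^n)
    ((summable_geometric_of_lt_one (norm_nonneg z) hz).mul_left C)
  intro n
  rw [norm_mul, norm_pow]
  exact mul_le_mul_of_nonneg_right (hu n) (by positivity)


lemma norm_q_lt (hq0 : 0 < q) (hq1 : q < 1) : ‖(q:ℂ)‖ < 1 := by
  rw [Complex.norm_real, Real.norm_of_nonneg hq0.le]; exact hq1

lemma P_succ (n : ℕ) : P q a (n+1) = P q a n * (1 - a * (q:ℂ)^n) := Finset.prod_range_succ _ _

lemma c_zero : cf q a 0 = 1 := by simp [cf, P]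

lemma c_rec (hq0 : 0 < q) (hq1 : q < 1) (ha : ‖a‖ < 1) (n : ℕ) :
    cf q a n * (1 - a * (q:ℂ)^n) = cf q a (n+1) * (1 - (q:ℂ) * (q:ℂ)^n) := by
  have hP := P_ne_zero (a := (q:ℂ)) hq0 hq1 (norm_q_lt hq0 hq1) n
  have hf := factor_ne_zero (a := (q:ℂ)) hq0 hq1 (norm_q_lt hq0 hq1) n
  rw [cf, cf, P_succ, P_succ (a := (q:ℂ))]
  rw [div_mul_eq_mul_div, div_mul_eq_mul_div, mul_div_mul_right _ _ hf]

noncomputable def S (q : ℝ) (a z : ℂ) : ℂ := ∑' n : ℕ, cf q a n * z^n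

lemma summable_S (hq0 : 0 < q) (hq1 : q < 1) (ha : ‖a‖ < 1) (hz : ‖z‖ < 1) :
    Summable fun n : ℕ => cf q a n * z^n :=
  summable_bound (norm_c_le hq0 hq1 ha) hz

lemma norm_qz_lt (hq0 : 0 < q) (hq1 : q < 1) (hz : ‖z‖ < 1) : ‖(q:ℂ) * z‖ < 1 := by
  rw [norm_mul, Complex.norm_real, Real.norm_of_nonneg hq0.le]
  calc q * ‖z‖ ≤ 1 * ‖z‖ := mul_le_mul_of_nonneg_right hq1.le (norm_nonneg z)
    _ < 1 := by simpa using hz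

lemma norm_pow_mul_lt' (hq0 : 0 < q) (hq1 : q < 1) (hz : ‖z‖ < 1) (n : ℕ) :
    ‖(q:ℂ)^n * z‖ < 1 := by
  rw [norm_mul, norm_pow, Complex.norm_real, Real.norm_of_nonneg hq0.le]
  calc q^n * ‖z‖ ≤ 1 * ‖z‖ :=
      mul_le_mul_of_nonneg_right (pow_le_one₀ hq0.le hq1.le) (norm_nonneg z)
    _ < 1 := by simpa using hz

lemma step (hq0 : 0 < q) (hq1 : q < 1) (ha : ‖a‖ < 1) (hz : ‖z‖ < 1) :
    S q a z * (1 - z) = (1 - a * z) * S q a ((q:ℂ) * z) := by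
  have hs := summable_S hq0 hq1 ha hz
  have hs' := summable_S hq0 hq1 ha (norm_qz_lt hq0 hq1 hz)
  have hb2 : ∀ n : ℕ, ‖cf q a n * (1 - (q:ℂ)^n)‖ ≤ D q * 2 := by
    intro n
    rw [norm_mul]
    apply mul_le_mul (norm_c_le hq0 hq1 ha n) _ (norm_nonneg _)
      ((norm_nonneg (cf q a 0)).trans (norm_c_le hq0 hq1 ha 0))
    calc ‖1 - (q:ℂ)^n‖ ≤ ‖(1:ℂ)‖ + ‖(q:ℂ)^n‖ := norm_sub_le _ _
      _ ≤ 1 + 1 := by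
          rw [norm_one, norm_pow, Complex.norm_real, Real.norm_of_nonneg hq0.le]
          have := pow_le_one₀ hq0.le hq1.le (n := n); linarith
      _ = 2 := by norm_num
  have hs3 : Summable fun n : ℕ => (cf q a n * (1 - (q:ℂ)^n)) * z^n := summable_bound hb2 hz
  have h1 : S q a z - S q a ((q:ℂ) * z) = ∑' n : ℕ, (cf q a n * (1 - (q:ℂ)^n)) * z^n := by
    rw [S, S, ← Summable.tsum_sub hs hs']
    apply tsum_congr
    intro n
    rw [mul_pow]
    ring
  have h2 : z * S q a z - (a * z) * S q a ((q:ℂ) * z)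
      = ∑' n : ℕ, (cf q a (n+1) * (1 - (q:ℂ) * (q:ℂ)^n)) * z^(n+1) := by
    rw [S, S, ← tsum_mul_left, ← tsum_mul_left, ← Summable.tsum_sub (hs.mul_left z) (hs'.mul_left (a*z))]
    apply tsum_congr
    intro n
    have := c_rec hq0 hq1 ha n
    calc z * (cf q a n * z^n) - a * z * (cf q a n * ((q:ℂ)*z)^n)
        = (cf q a n * (1 - a * (q:ℂ)^n)) * z^(n+1) := by rw [mul_pow]; ring
      _ = (cf q a (n+1) * (1 - (q:ℂ) * (q:ℂ)^n)) * z^(n+1) := by rw [this]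
  have h3 : ∑' n : ℕ, (cf q a n * (1 - (q:ℂ)^n)) * z^n
      = ∑' n : ℕ, (cf q a (n+1) * (1 - (q:ℂ) * (q:ℂ)^n)) * z^(n+1) := by
    rw [Summable.tsum_eq_zero_add hs3]
    simp only [pow_zero, pow_succ]
    norm_num
    apply tsum_congr
    intro n
    ring
  have key : S q a z - S q a ((q:ℂ) * z) = z * S q a z - (a * z) * S q a ((q:ℂ) * z) := by
    rw [h1, h2, h3]
  linear_combination key

lemma iterate (hq0 : 0 < q) (hq1 : q < 1) (ha : ‖a‖ < 1) (hz : ‖z‖ < 1) (N : ℕ) :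
    S q a z * P q z N = P q (a*z) N * S q a ((q:ℂ)^N * z) := by
  induction N with
  | zero => simp [P]
  | succ N ih =>
    have hz' : ‖(q:ℂ)^N * z‖ < 1 := norm_pow_mul_lt' hq0 hq1 hz N
    have h' := step hq0 hq1 ha hz'
    have e : (q:ℂ) * ((q:ℂ)^N * z) = (q:ℂ)^(N+1) * z := by ring
    rw [e] at h'
    rw [P_succ, P_succ (a := a*z)]
    linear_combination (1 - z * (q:ℂ)^N) * ih + P q (a*z) N * h'

lemma tendsto_S_one (hq0 : 0 < q) (hq1 : q < 1) (ha : ‖a‖ < 1) (hz : ‖z‖ < 1) :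
    Tendsto (fun N : ℕ => S q a ((q:ℂ)^N * z)) atTop (𝓝 1) := by
  have hDz : (0:ℝ) < 1 - ‖z‖ := by linarith
  have bound : ∀ N : ℕ, ‖S q a ((q:ℂ)^N * z) - 1‖ ≤ (D q * (1 - ‖z‖)⁻¹) * q^N := by
    intro N
    set w := (q:ℂ)^N * z with hw
    have hwlt : ‖w‖ < 1 := norm_pow_mul_lt' hq0 hq1 hz N
    have hweq : ‖w‖ = q^N * ‖z‖ := by
      rw [hw, norm_mul, norm_pow, Complex.norm_real, Real.norm_of_nonneg hq0.le]
    have hS := summable_S hq0 hq1 ha hwlt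
    have hsub : S q a w - 1 = ∑' n : ℕ, cf q a (n+1) * w^(n+1) := by
      rw [S, Summable.tsum_eq_zero_add hS, c_zero]
      simp
    have hterm : ∀ n : ℕ, ‖cf q a (n+1) * w^(n+1)‖ ≤ (D q * q^N) * ‖z‖^n := by
      intro n
      rw [norm_mul, norm_pow]
      have h1 : ‖cf q a (n+1)‖ ≤ D q := norm_c_le hq0 hq1 ha (n+1)
      have h2 : ‖w‖^(n+1) ≤ q^N * ‖z‖^n := by
        rw [pow_succ']
        have hwz : ‖w‖ ≤ q^N * ‖z‖ := le_of_eq hweq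
        have hwn : ‖w‖^n ≤ ‖z‖^n := by
          apply pow_le_pow_left₀ (norm_nonneg w) _ n
          rw [hweq]
          calc q^N * ‖z‖ ≤ 1 * ‖z‖ :=
              mul_le_mul_of_nonneg_right (pow_le_one₀ hq0.le hq1.le) (norm_nonneg z)
            _ = ‖z‖ := one_mul _
        calc ‖w‖ * ‖w‖^n ≤ (q^N * ‖z‖) * ‖z‖^n := by
              apply mul_le_mul hwz hwn (by positivity) (by positivity)
          _ = q^N * (‖z‖ * ‖z‖^n) := by ring
          _ ≤ q^N * (1 * ‖z‖^n) := by
              apply mul_le_mul_of_nonneg_left _ (by positivity)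
              exact mul_le_mul_of_nonneg_right hz.le (by positivity)
          _ = q^N * ‖z‖^n := by ring
      calc ‖cf q a (n+1)‖ * ‖w‖^(n+1) ≤ D q * (q^N * ‖z‖^n) := by
            apply mul_le_mul h1 h2 (by positivity)
              ((norm_nonneg (cf q a 0)).trans (norm_c_le hq0 hq1 ha 0))
        _ = (D q * q^N) * ‖z‖^n := by ring
    have hsum : Summable fun n : ℕ => ‖cf q a (n+1) * w^(n+1)‖ := by
      apply Summable.of_nonneg_of_le (fun n => norm_nonneg _) hterm
      exact (summable_geometric_of_lt_one (norm_nonneg z) hz).mul_left _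
    rw [hsub]
    calc ‖∑' n : ℕ, cf q a (n+1) * w^(n+1)‖ ≤ ∑' n : ℕ, ‖cf q a (n+1) * w^(n+1)‖ :=
          norm_tsum_le_tsum_norm hsum
      _ ≤ ∑' n : ℕ, (D q * q^N) * ‖z‖^n := by
          apply Summable.tsum_le_tsum hterm hsum
          exact (summable_geometric_of_lt_one (norm_nonneg z) hz).mul_left _
      _ = (D q * q^N) * (1 - ‖z‖)⁻¹ := by
          rw [tsum_mul_left, tsum_geometric_of_lt_one (norm_nonneg z) hz]
      _ = (D q * (1 - ‖z‖)⁻¹) * q^N := by ring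
  have h0 : Tendsto (fun N : ℕ => S q a ((q:ℂ)^N * z) - 1) atTop (𝓝 0) := by
    apply squeeze_zero_norm bound
    have := (tendsto_pow_atTop_nhds_zero_of_lt_one hq0.le hq1).const_mul (D q * (1 - ‖z‖)⁻¹)
    simpa using this
  have := h0.add_const 1
  simpa using this

theorem qbinom (hq0 : 0 < q) (hq1 : q < 1) (ha : ‖a‖ < 1) (hz : ‖z‖ < 1) :
    S q a z = qPochInf q (a*z) / qPochInf q z := by
  have haz : ‖a*z‖ < 1 := by
    rw [norm_mul]
    calc ‖a‖ * ‖z‖ ≤ 1 * ‖z‖ := mul_le_mul_of_nonneg_right ha.le (norm_nonneg z)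
      _ < 1 := by simpa using hz
  have t1 : Tendsto (fun N : ℕ => S q a z * P q z N) atTop (𝓝 (S q a z * qPochInf q z)) := by
    have h := (multipliable hq0 hq1 hz).hasProd.tendsto_prod_nat
    exact (h.const_mul (S q a z)).congr (fun N => by rw [P])
  have t2 : Tendsto (fun N : ℕ => P q (a*z) N * S q a ((q:ℂ)^N * z)) atTop
      (𝓝 (qPochInf q (a*z) * 1)) := by
    have h := (multipliable hq0 hq1 haz).hasProd.tendsto_prod_nat
    exact ((h.congr (fun N => by rw [P])).mul (tendsto_S_one hq0 hq1 ha hz))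
  have heq := tendsto_nhds_unique (t1.congr (fun N => iterate hq0 hq1 ha hz N)) t2
  rw [mul_one] at heq
  rw [eq_div_iff (qPochInf_ne_zero hq0 hq1 hz)]
  exact heq


lemma norm_exp_lt (hq0 : 0 < q) (hq1 : q < 1) {u : ℂ} (hu : 0 < u.re) :
    ‖Complex.exp (u * (Real.log q : ℂ))‖ < 1 := by
  rw [Complex.norm_exp]
  have hre : (u * (Real.log q : ℂ)).re = u.re * Real.log q := by
    simp [Complex.mul_re]
  rw [hre]
  exact Real.exp_lt_one_iff.mpr (mul_neg_of_pos_of_neg hu (Real.log_neg hq0 hq1))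


end JQB

open JQB

/-- Jackson q-beta integral: for `0 < q < 1`, `Re b > 0`, `Re(c-b) > 0`,
`∫_0^1 t^{b-1} (tq;q)_∞/(tq^{c-b};q)_∞ d_q t = Γ_q(b)Γ_q(c-b)/Γ_q(c)`. -/
theorem jackson_q_beta (q : ℝ) (hq0 : 0 < q) (hq1 : q < 1)
    (b c : ℂ) (hb : 0 < b.re) (hcb : 0 < (c - b).re) :
    (1 - (q : ℂ)) * ∑' n : ℕ, (q : ℂ) ^ n *
        (Complex.exp ((b - 1) * Real.log (q ^ n)) *
          qPochInf q ((q : ℂ) ^ n * (q : ℂ)) /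
          qPochInf q ((q : ℂ) ^ n * Complex.exp ((c - b) * Real.log q)))
      = qGamma q b * qGamma q (c - b) / qGamma q c := by
  have hl : (q:ℂ) = Complex.exp ((Real.log q : ℝ) : ℂ) := by
    rw [← Complex.ofReal_exp, Real.exp_log hq0]
  set l : ℝ := Real.log q with hldef
  set zz : ℂ := Complex.exp (b * (l:ℂ)) with hzz
  set av : ℂ := Complex.exp ((c - b) * (l:ℂ)) with hav
  set w : ℂ := Complex.exp (c * (l:ℂ)) with hwdef
  have hcre : 0 < c.re := by
    have : (c - b).re = c.re - b.re := by simp [Complex.sub_re]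
    rw [this] at hcb; linarith
  have hz : ‖zz‖ < 1 := norm_exp_lt hq0 hq1 hb
  have ha : ‖av‖ < 1 := norm_exp_lt hq0 hq1 hcb
  have hqn : ‖(q:ℂ)‖ < 1 := norm_q_lt hq0 hq1
  have havz : av * zz = w := by
    rw [hav, hzz, hwdef, ← Complex.exp_add]
    congr 1
    ring
  -- rewrite the summand
  have hterm : ∀ n : ℕ, (q : ℂ) ^ n *
      (Complex.exp ((b - 1) * Real.log (q ^ n)) * qPochInf q ((q : ℂ) ^ n * (q : ℂ)) /
        qPochInf q ((q : ℂ) ^ n * av))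
      = (qPochInf q (q:ℂ) / qPochInf q av) * (cf q av n * zz ^ n) := by
    intro n
    have hlog : Real.log (q ^ n) = n * l := by rw [Real.log_pow, hldef]
    have hqpow : (q:ℂ)^n = Complex.exp ((n:ℂ) * (l:ℂ)) := by
      rw [hl, ← Complex.exp_nat_mul]
    have hzpow : (q:ℂ)^n * Complex.exp ((b - 1) * ((n * l : ℝ) : ℂ)) = zz ^ n := by
      rw [hqpow, hzz, ← Complex.exp_nat_mul, ← Complex.exp_add]
      congr 1
      push_cast
      ring
    have h1 : qPochInf q ((q:ℂ)^n * (q:ℂ)) = qPochInf q (q:ℂ) / P q (q:ℂ) n := by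
      rw [eq_div_iff (P_ne_zero hq0 hq1 hqn n), mul_comm]
      exact shift hq0 hq1 hqn n
    have h2 : qPochInf q ((q:ℂ)^n * av) = qPochInf q av / P q av n := by
      rw [eq_div_iff (P_ne_zero hq0 hq1 ha n), mul_comm]
      exact shift hq0 hq1 ha n
    rw [hlog]
    push_cast
    rw [h1, h2]
    have e : (q:ℂ)^n * (Complex.exp ((b - 1) * ((n:ℂ) * (l:ℂ))) *
        (qPochInf q (q:ℂ) / P q (q:ℂ) n) / (qPochInf q av / P q av n))
        = ((q:ℂ)^n * Complex.exp ((b - 1) * ((n:ℂ) * (l:ℂ)))) *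
          ((qPochInf q (q:ℂ) / P q (q:ℂ) n) / (qPochInf q av / P q av n)) := by ring
    rw [e]
    have hzpow' : (q:ℂ)^n * Complex.exp ((b - 1) * ((n:ℂ) * (l:ℂ))) = zz ^ n := by
      rw [← hzpow]
      norm_cast
    rw [hzpow', cf]
    have hPq := P_ne_zero hq0 hq1 hqn n
    have hPa := P_ne_zero hq0 hq1 ha n
    have hQa := qPochInf_ne_zero hq0 hq1 ha
    field_simp
  rw [tsum_congr hterm, tsum_mul_left]
  have hSz : ∑' n : ℕ, cf q av n * zz ^ n = qPochInf q (av * zz) / qPochInf q zz :=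
    qbinom hq0 hq1 ha hz
  rw [hSz, havz]
  -- now pure algebra with qGamma
  have hbase : (1 - (q:ℂ)) ≠ 0 := by
    intro h
    have : (q:ℂ) = 1 := by linear_combination -h
    rw [this] at hqn
    simp at hqn
  have hX : ((1 - q:ℂ)) ^ ((1:ℂ) - b) * ((1 - q:ℂ)) ^ ((1:ℂ) - (c - b))
      = (1 - (q:ℂ)) * ((1 - q:ℂ)) ^ ((1:ℂ) - c) := by
    rw [← Complex.cpow_add _ _ hbase]
    nth_rewrite 2 [show (1 - (q:ℂ)) = (1 - (q:ℂ)) ^ (1:ℂ) from (Complex.cpow_one _).symm]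
    rw [← Complex.cpow_add _ _ hbase]
    congr 1
    ring
  have hQz := qPochInf_ne_zero hq0 hq1 hz
  have hQa := qPochInf_ne_zero hq0 hq1 ha
  have hQw := qPochInf_ne_zero hq0 hq1 (norm_exp_lt hq0 hq1 hcre)
  have hQq := qPochInf_ne_zero hq0 hq1 hqn
  have hX3 : ((1 - q:ℂ)) ^ ((1:ℂ) - c) ≠ 0 := by
    intro h
    exact hbase ((Complex.cpow_eq_zero_iff _ _).mp h).1
  rw [qGamma, qGamma, qGamma]
  have e1 : Complex.exp (b * ((Real.log q : ℝ):ℂ)) = zz := rfl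
  have e2 : Complex.exp ((c-b) * ((Real.log q : ℝ):ℂ)) = av := rfl
  have e3 : Complex.exp (c * ((Real.log q : ℝ):ℂ)) = w := rfl
  rw [e1, e2, e3]
  field_simp
  linear_combination (-qPochInf q w) * hX
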